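/- Let Γ be a finite connected unweighted simple graph on N ≥ 2 vertices, with dual Cheeger constant h̄ and normalized Laplacian eigenvalues 0 = λ₁ ≤ λ₂ ≤ ⋯ ≤ λ_N. Then 2h̄ ≤ λ_N ≤ 1 + √(1 − (1 − h̄)²). -/

import Mathlib

set_option linter.unusedSectionVars false
set_option linter.unusedVariables false
set_option maxHeartbeats 1000000

open scoped BigOperators

/-- The normalized Laplacian of a finite simple graph:
`Δf(v) = f(v) − (1/deg v) Σ_{u∼v} f(u)`. -/
noncomputable def nlapG {V : Type*} [Fintype V] (G : SimpleGraph V) [DecidableRel G.Adj]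
    (f : V → ℝ) : V → ℝ :=
  fun v => f v - (∑ u ∈ G.neighborFinset v, f u) / (G.degree v : ℝ)

/-- The dual Cheeger constant: `h̄ = max` over pairs of disjoint nonempty subsets `V₁, V₂`
of `2|E(V₁,V₂)| / (vol V₁ + vol V₂)`. -/
noncomputable def dualCheeger {V : Type*} [Fintype V] (G : SimpleGraph V)
    [DecidableRel G.Adj] : ℝ :=
  sSup { r : ℝ | ∃ V₁ V₂ : Finset V, V₁.Nonempty ∧ V₂.Nonempty ∧ Disjoint V₁ V₂ ∧
    r = 2 * (∑ u ∈ V₁, ∑ v ∈ V₂, if G.Adj u v then (1 : ℝ) else 0) /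
      ((∑ v ∈ V₁, (G.degree v : ℝ)) + ∑ v ∈ V₂, (G.degree v : ℝ)) }

/- ### Auxiliary real-analysis lemmas -/

lemma dcaux_sqrtAMGM (a b s : ℝ) (ha : 0 ≤ a) (hb : 0 ≤ b) (hs : 0 ≤ s) :
    Real.sqrt (a*b) + s ≤ Real.sqrt ((a+s)*(b+s)) := by
  have h0 : Real.sqrt (a*b) ≤ (a+b)/2 := by
    have h1 : a*b ≤ ((a+b)/2)^2 := by nlinarith [sq_nonneg (a-b)]
    calc Real.sqrt (a*b) ≤ Real.sqrt (((a+b)/2)^2) := Real.sqrt_le_sqrt h1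
    _ = (a+b)/2 := Real.sqrt_sq (by linarith)
  have hnn : 0 ≤ Real.sqrt (a*b) + s := by positivity
  have h2 : (Real.sqrt (a*b) + s)^2 ≤ (a+s)*(b+s) := by
    have := Real.sq_sqrt (mul_nonneg ha hb)
    nlinarith [Real.sqrt_nonneg (a*b)]
  calc Real.sqrt (a*b) + s = Real.sqrt ((Real.sqrt (a*b) + s)^2) := (Real.sqrt_sq hnn).symm
  _ ≤ Real.sqrt ((a+s)*(b+s)) := Real.sqrt_le_sqrt h2

/-- The key estimate in the hard direction of the dual Cheeger inequality. -/
lemma dcaux_keyineq {ι : Type*} (S : Finset ι) (x y : ι → ℝ) (ε : ℝ)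
    (h2 : ∑ i ∈ S, (x i^2 + y i^2) = 2)
    (hp : ∑ i ∈ S, (x i + y i)^2 = 2*ε)
    (hε1 : ε ≤ 1) :
    1 - ∑ i ∈ S.filter (fun i => x i * y i < 0), min (x i^2) (y i^2)
      ≤ Real.sqrt (ε * (2 - ε)) := by
  classical
  set s := ∑ i ∈ S.filter (fun i => ¬ (x i * y i < 0)), (x i^2 + y i^2) with hs_def
  set A := ∑ i ∈ S.filter (fun i => x i * y i < 0), (x i + y i)^2 with hA_def
  set A' := ∑ i ∈ S.filter (fun i => x i * y i < 0), (x i - y i)^2 with hA'_def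
  set T := ∑ i ∈ S.filter (fun i => x i * y i < 0), |x i - y i| * |x i + y i| with hT_def
  set m := ∑ i ∈ S.filter (fun i => x i * y i < 0), min (x i^2) (y i^2) with hm_def
  have hε0 : 0 ≤ ε := by
    have : 0 ≤ ∑ i ∈ S, (x i + y i)^2 := Finset.sum_nonneg fun i _ => sq_nonneg _
    linarith
  have hsplit2 : (∑ i ∈ S.filter (fun i => x i * y i < 0), (x i^2 + y i^2)) + s = 2 := by
    rw [hs_def, Finset.sum_filter_add_sum_filter_not, h2]
  have hsplitp : A + (∑ i ∈ S.filter (fun i => ¬ (x i * y i < 0)), (x i + y i)^2) = 2*ε := by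
    rw [hA_def, Finset.sum_filter_add_sum_filter_not, hp]
  have hs0 : 0 ≤ s := Finset.sum_nonneg fun i _ => by positivity
  have hA0 : 0 ≤ A := Finset.sum_nonneg fun i _ => sq_nonneg _
  have hA'0 : 0 ≤ A' := Finset.sum_nonneg fun i _ => sq_nonneg _
  have hT0 : 0 ≤ T := Finset.sum_nonneg fun i _ => by positivity
  have hsme : s ≤ ∑ i ∈ S.filter (fun i => ¬ (x i * y i < 0)), (x i + y i)^2 := by
    rw [hs_def]
    refine Finset.sum_le_sum fun i hi => ?_
    have hxy : 0 ≤ x i * y i := not_lt.mp (Finset.mem_filter.mp hi).2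
    nlinarith
  have hA_le : A ≤ 2*ε - s := by linarith
  have hAA' : A + A' = 2*(2 - s) := by
    rw [hA_def, hA'_def, ← Finset.sum_add_distrib]
    have : ∀ i ∈ S.filter (fun i => x i * y i < 0), (x i + y i)^2 + (x i - y i)^2
        = 2*(x i^2 + y i^2) := fun i _ => by ring
    rw [Finset.sum_congr rfl this, ← Finset.mul_sum]
    have h22 : ∑ i ∈ S.filter (fun i => x i * y i < 0), (x i^2 + y i^2) = 2 - s := by linarith
    rw [h22]
  have hm : m = ((2 - s) - T)/2 := by
    rw [hm_def, hT_def]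
    have hpt : ∀ i ∈ S.filter (fun i => x i * y i < 0),
        min (x i^2) (y i^2) = ((x i^2 + y i^2) - |x i - y i| * |x i + y i|)/2 := by
      intro i _
      have habs : |x i - y i| * |x i + y i| = |x i^2 - y i^2| := by
        rw [← abs_mul]; ring_nf
      rw [habs]
      rcases le_total (x i^2) (y i^2) with h | h
      · rw [min_eq_left h, abs_of_nonpos (by linarith)]; ring
      · rw [min_eq_right h, abs_of_nonneg (by linarith)]; ring
    rw [Finset.sum_congr rfl hpt, ← Finset.sum_div, Finset.sum_sub_distrib]
    have h22 : ∑ i ∈ S.filter (fun i => x i * y i < 0), (x i^2 + y i^2) = 2 - s := by linarith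
    rw [h22]
  have hCS : T ≤ Real.sqrt (A' * A) := by
    have hsq : T^2 ≤ A' * A := by
      have := Finset.sum_mul_sq_le_sq_mul_sq (S.filter (fun i => x i * y i < 0))
        (fun i => |x i - y i|) (fun i => |x i + y i|)
      simp only [sq_abs] at this
      rw [hT_def, hA'_def, hA_def]
      exact this
    calc T = Real.sqrt (T^2) := (Real.sqrt_sq hT0).symm
    _ ≤ Real.sqrt (A' * A) := Real.sqrt_le_sqrt hsq
  have hs2ε : s ≤ 2*ε := by linarith
  have hmono : A' * A ≤ (2*ε - s) * ((4 - 2*ε) - s) := by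
    have hA' : A' = 2*(2-s) - A := by linarith
    rw [hA']
    nlinarith [mul_nonneg (sub_nonneg.mpr hA_le) (by linarith : (0:ℝ) ≤ (4 - 2*ε) - s - A)]
  have hT2 : T ≤ Real.sqrt ((2*ε - s) * ((4 - 2*ε) - s)) :=
    le_trans hCS (Real.sqrt_le_sqrt hmono)
  have hAM : Real.sqrt ((2*ε - s) * ((4 - 2*ε) - s)) + s ≤ Real.sqrt ((2*ε) * (4 - 2*ε)) := by
    have := dcaux_sqrtAMGM (2*ε - s) ((4 - 2*ε) - s) s (by linarith) (by linarith) hs0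
    calc Real.sqrt ((2*ε - s) * ((4 - 2*ε) - s)) + s
        ≤ Real.sqrt ((2*ε - s + s) * ((4 - 2*ε) - s + s)) := this
      _ = Real.sqrt ((2*ε) * (4 - 2*ε)) := by ring_nf
  have hfour : Real.sqrt ((2*ε) * (4 - 2*ε)) = 2 * Real.sqrt (ε * (2 - ε)) := by
    rw [show (2*ε) * (4 - 2*ε) = 4 * (ε * (2 - ε)) by ring]
    rw [show (4:ℝ) = 2^2 by norm_num, Real.sqrt_mul (by positivity), Real.sqrt_sq (by norm_num)]
  have hfinal : T + s ≤ 2 * Real.sqrt (ε * (2 - ε)) := by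
    rw [← hfour]
    linarith
  linarith [hm]

/- ### Telescoping sums for the layer-cake decomposition -/

noncomputable def dcaux_predv (ts : Finset ℝ) (t : ℝ) : ℝ :=
  if h : (ts.filter (· < t)).Nonempty then (ts.filter (· < t)).max' h else 0

lemma dcaux_predv_lt (ts : Finset ℝ) (t : ℝ) (ht : 0 < t) : dcaux_predv ts t < t := by
  rw [dcaux_predv]
  split_ifs with h
  · have := Finset.max'_mem _ h
    exact (Finset.mem_filter.mp this).2
  · exact ht

lemma dcaux_tele_aux : ∀ (N : ℕ) (ts : Finset ℝ), ts.card ≤ N → (∀ x ∈ ts, (0:ℝ) < x) →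
    ∀ (h : ts.Nonempty), ∑ t ∈ ts, (t - dcaux_predv ts t) = ts.max' h := by
  intro N
  induction N with
  | zero => intro ts hcard hpos h; simp [Finset.card_eq_zero.mp (Nat.le_zero.mp hcard)] at h
  | succ N ih =>
    intro ts hcard hpos h
    set M := ts.max' h with hM
    have hMmem : M ∈ ts := ts.max'_mem h
    by_cases he : (ts.erase M).Nonempty
    · have hfilter_eq : ∀ t ∈ ts.erase M, ts.filter (· < t) = (ts.erase M).filter (· < t) := by
        intro t htmem
        ext x
        simp only [Finset.mem_filter, Finset.mem_erase]
        constructor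
        · rintro ⟨hx, hxt⟩
          have htM : t ≤ M := ts.le_max' t (Finset.mem_of_mem_erase htmem)
          exact ⟨⟨by intro hxM; rw [hxM] at hxt; linarith, hx⟩, hxt⟩
        · rintro ⟨⟨_, hx⟩, hxt⟩; exact ⟨hx, hxt⟩
      have hpredM : dcaux_predv ts M = (ts.erase M).max' he := by
        have : ts.filter (· < M) = ts.erase M := by
          ext x
          simp only [Finset.mem_filter, Finset.mem_erase]
          constructor
          · rintro ⟨hx, hxM⟩; exact ⟨ne_of_lt hxM, hx⟩
          · rintro ⟨hne, hx⟩; exact ⟨hx, lt_of_le_of_ne (ts.le_max' x hx) hne⟩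
        rw [dcaux_predv]
        split_ifs with hne
        · congr 1
        · rw [this] at hne; exact absurd he hne
      have hsum : ∑ t ∈ ts, (t - dcaux_predv ts t)
          = (M - dcaux_predv ts M) + ∑ t ∈ ts.erase M, (t - dcaux_predv ts t) :=
        (Finset.add_sum_erase ts _ hMmem).symm
      have hsum2 : ∑ t ∈ ts.erase M, (t - dcaux_predv ts t)
          = ∑ t ∈ ts.erase M, (t - dcaux_predv (ts.erase M) t) := by
        refine Finset.sum_congr rfl fun t htm => ?_
        rw [dcaux_predv, dcaux_predv, hfilter_eq t htm]
      have hcard' : (ts.erase M).card ≤ N := by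
        have := Finset.card_erase_of_mem hMmem
        omega
      have hih := ih (ts.erase M) hcard' (fun x hx => hpos x (Finset.mem_of_mem_erase hx)) he
      rw [hsum, hsum2, hih, hpredM]
      ring
    · have hts : ts = {M} := by
        have := Finset.eq_empty_iff_forall_notMem.mp (Finset.not_nonempty_iff_eq_empty.mp he)
        apply Finset.eq_singleton_iff_unique_mem.mpr
        refine ⟨hMmem, fun x hx => ?_⟩
        by_contra hne
        exact this x (Finset.mem_erase.mpr ⟨hne, hx⟩)
      rw [hts]
      rw [Finset.sum_singleton]
      have : dcaux_predv {M} M = 0 := by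
        rw [dcaux_predv]
        split_ifs with hne
        · exfalso
          obtain ⟨x, hx⟩ := hne
          simp only [Finset.mem_filter, Finset.mem_singleton] at hx
          linarith [hx.1 ▸ hx.2]
        · rfl
      rw [this]
      ring

lemma dcaux_tele (ts : Finset ℝ) (hpos : ∀ x ∈ ts, (0:ℝ) < x) {a : ℝ} (ha : a ∈ ts) :
    ∑ t ∈ ts.filter (· ≤ a), (t - dcaux_predv ts t) = a := by
  classical
  have hne : (ts.filter (· ≤ a)).Nonempty := ⟨a, Finset.mem_filter.mpr ⟨ha, le_refl a⟩⟩
  have hsub : ∀ t ∈ ts.filter (· ≤ a), ts.filter (· < t) = (ts.filter (· ≤ a)).filter (· < t) := by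
    intro t htm
    rw [Finset.mem_filter] at htm
    ext x
    simp only [Finset.mem_filter]
    constructor
    · rintro ⟨hx, hxt⟩; exact ⟨⟨hx, by linarith [htm.2]⟩, hxt⟩
    · rintro ⟨⟨hx, _⟩, hxt⟩; exact ⟨hx, hxt⟩
  have hmax : (ts.filter (· ≤ a)).max' hne = a := by
    apply le_antisymm
    · apply Finset.max'_le
      intro y hy
      exact (Finset.mem_filter.mp hy).2
    · refine Finset.le_max' _ a ?_
      exact Finset.mem_filter.mpr ⟨ha, le_refl a⟩
  have h1 : ∑ t ∈ ts.filter (· ≤ a), (t - dcaux_predv ts t)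
      = ∑ t ∈ ts.filter (· ≤ a), (t - dcaux_predv (ts.filter (· ≤ a)) t) := by
    refine Finset.sum_congr rfl fun t htm => ?_
    rw [dcaux_predv, dcaux_predv, hsub t htm]
  rw [h1, dcaux_tele_aux (ts.filter (· ≤ a)).card _ (le_refl _)
    (fun x hx => hpos x (Finset.mem_filter.mp hx).1) hne, hmax]

/- ### Graph sums over ordered adjacent pairs -/

section Graph

variable {V : Type*} [Fintype V] [DecidableEq V] (G : SimpleGraph V) [DecidableRel G.Adj]

/-- The set of ordered pairs of adjacent vertices. -/
noncomputable def dcPe : Finset (V × V) := Finset.univ.filter fun p => G.Adj p.1 p.2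

lemma dc_mem_Pe {p : V × V} : p ∈ dcPe G ↔ G.Adj p.1 p.2 := by
  simp [dcPe]

lemma dc_sumPe_eq (F : V → V → ℝ) :
    ∑ p ∈ dcPe G, F p.1 p.2 = ∑ v : V, ∑ w ∈ G.neighborFinset v, F v w := by
  rw [dcPe, Finset.sum_filter, ← Finset.univ_product_univ, Finset.sum_product]
  refine Finset.sum_congr rfl fun v _ => ?_
  rw [SimpleGraph.neighborFinset_eq_filter, Finset.sum_filter]

lemma dc_sumPe_eq' (F : V → V → ℝ) :
    ∑ p ∈ dcPe G, F p.1 p.2 = ∑ w : V, ∑ v ∈ G.neighborFinset w, F v w := by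
  rw [dcPe, Finset.sum_filter, ← Finset.univ_product_univ, Finset.sum_product]
  rw [Finset.sum_comm]
  refine Finset.sum_congr rfl fun w _ => ?_
  rw [SimpleGraph.neighborFinset_eq_filter, Finset.sum_filter]
  exact Finset.sum_congr rfl fun v _ => if_congr (G.adj_comm v w) rfl rfl

lemma dc_sumPe_fst (F : V → ℝ) :
    ∑ p ∈ dcPe G, F p.1 = ∑ v : V, (G.degree v : ℝ) * F v := by
  rw [dc_sumPe_eq G (fun v _ => F v)]
  refine Finset.sum_congr rfl fun v _ => ?_
  rw [Finset.sum_const, SimpleGraph.card_neighborFinset_eq_degree, nsmul_eq_mul]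

lemma dc_sumPe_snd (F : V → ℝ) :
    ∑ p ∈ dcPe G, F p.2 = ∑ v : V, (G.degree v : ℝ) * F v := by
  rw [dc_sumPe_eq' G (fun _ w => F w)]
  refine Finset.sum_congr rfl fun v _ => ?_
  rw [Finset.sum_const, SimpleGraph.card_neighborFinset_eq_degree, nsmul_eq_mul]

lemma dc_Qform (hdeg : ∀ v, 0 < G.degree v) (g h : V → ℝ) :
    ∑ v, (G.degree v : ℝ) * nlapG G g v * h v
      = (∑ v, (G.degree v : ℝ) * g v * h v) - ∑ p ∈ dcPe G, g p.1 * h p.2 := by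
  rw [dc_sumPe_eq' G (fun a b => g a * h b), ← Finset.sum_sub_distrib]
  refine Finset.sum_congr rfl fun v _ => ?_
  have hd : ((G.degree v : ℝ)) ≠ 0 := by exact_mod_cast (hdeg v).ne'
  rw [nlapG, ← Finset.sum_mul]
  field_simp

lemma dc_Qhalf (hdeg : ∀ v, 0 < G.degree v) (g : V → ℝ) :
    ∑ v, (G.degree v : ℝ) * nlapG G g v * g v
      = (1/2) * ∑ p ∈ dcPe G, (g p.1 - g p.2)^2 := by
  have h1 : ∑ p ∈ dcPe G, (g p.1 - g p.2)^2
      = (∑ p ∈ dcPe G, (g p.1)*(g p.1)) + (∑ p ∈ dcPe G, (g p.2)*(g p.2))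
        - 2 * ∑ p ∈ dcPe G, g p.1 * g p.2 := by
    calc ∑ p ∈ dcPe G, (g p.1 - g p.2)^2
        = ∑ p ∈ dcPe G, (g p.1 * g p.1 + g p.2 * g p.2 - 2*(g p.1 * g p.2)) :=
          Finset.sum_congr rfl fun p _ => by ring
      _ = _ := by rw [Finset.sum_sub_distrib, Finset.sum_add_distrib, ← Finset.mul_sum]
  rw [dc_Qform G hdeg g g, h1, dc_sumPe_fst G (fun v => g v * g v),
    dc_sumPe_snd G (fun v => g v * g v)]
  have : ∀ v : V, (G.degree v:ℝ) * (g v * g v) = (G.degree v:ℝ) * g v * g v := fun v => by ring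
  rw [Finset.sum_congr rfl fun v _ => this v]
  ring

lemma dc_helper_cross (V₁ V₂ : Finset V) :
    ∑ p ∈ dcPe G, (if p.1 ∈ V₁ ∧ p.2 ∈ V₂ then (1:ℝ) else 0)
      = ∑ a ∈ V₁, ∑ b ∈ V₂, (if G.Adj a b then (1:ℝ) else 0) := by
  classical
  rw [dcPe, Finset.sum_filter, ← Finset.univ_product_univ, Finset.sum_product]
  have hrhs : ∀ (s : Finset V) (F : V → ℝ), ∑ a ∈ s, F a = ∑ a : V, if a ∈ s then F a else 0 := by
    intro s F
    rw [Finset.sum_ite_mem, Finset.univ_inter]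
  rw [hrhs V₁ (fun a => ∑ b ∈ V₂, (if G.Adj a b then (1:ℝ) else 0))]
  refine Finset.sum_congr rfl fun a _ => ?_
  rw [show (if a ∈ V₁ then (∑ b ∈ V₂, if G.Adj a b then (1:ℝ) else 0) else 0)
      = (∑ b : V, if a ∈ V₁ then (if b ∈ V₂ then (if G.Adj a b then (1:ℝ) else 0) else 0) else 0)
    from ?_]
  · refine Finset.sum_congr rfl fun b _ => ?_
    split_ifs <;> first | rfl | (exfalso; tauto)
  · split_ifs with h
    · rw [hrhs V₂ (fun b => if G.Adj a b then (1:ℝ) else 0)]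
    · rw [Finset.sum_eq_zero fun b _ => rfl]

lemma dc_element_le_one (hdeg : ∀ v, 0 < G.degree v) (V₁ V₂ : Finset V) (h1 : V₁.Nonempty)
    (h2 : V₂.Nonempty) :
    2 * (∑ a ∈ V₁, ∑ b ∈ V₂, if G.Adj a b then (1 : ℝ) else 0) /
      ((∑ v ∈ V₁, (G.degree v : ℝ)) + ∑ v ∈ V₂, (G.degree v : ℝ)) ≤ 1 := by
  classical
  have hvol1 : (0:ℝ) < ∑ v ∈ V₁, (G.degree v : ℝ) :=
    Finset.sum_pos (fun v _ => by exact_mod_cast hdeg v) h1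
  have hvol2 : (0:ℝ) < ∑ v ∈ V₂, (G.degree v : ℝ) :=
    Finset.sum_pos (fun v _ => by exact_mod_cast hdeg v) h2
  have hdegsum : ∀ a : V, (∑ b : V, if G.Adj a b then (1:ℝ) else 0) = (G.degree a : ℝ) := by
    intro a
    rw [Finset.sum_boole]
    congr 1
    rw [SimpleGraph.degree, SimpleGraph.neighborFinset_eq_filter]
  have hE1 : (∑ a ∈ V₁, ∑ b ∈ V₂, if G.Adj a b then (1 : ℝ) else 0)
      ≤ ∑ v ∈ V₁, (G.degree v : ℝ) := by
    refine Finset.sum_le_sum fun a _ => ?_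
    calc ∑ b ∈ V₂, (if G.Adj a b then (1:ℝ) else 0)
        ≤ ∑ b : V, (if G.Adj a b then (1:ℝ) else 0) :=
          Finset.sum_le_sum_of_subset_of_nonneg (Finset.subset_univ V₂)
            (fun b _ _ => by positivity)
      _ = (G.degree a : ℝ) := hdegsum a
  have hE2 : (∑ a ∈ V₁, ∑ b ∈ V₂, if G.Adj a b then (1 : ℝ) else 0)
      ≤ ∑ v ∈ V₂, (G.degree v : ℝ) := by
    rw [Finset.sum_comm]
    refine Finset.sum_le_sum fun b _ => ?_
    calc ∑ a ∈ V₁, (if G.Adj a b then (1:ℝ) else 0)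
        ≤ ∑ a : V, (if G.Adj a b then (1:ℝ) else 0) :=
          Finset.sum_le_sum_of_subset_of_nonneg (Finset.subset_univ V₁)
            (fun a _ _ => by positivity)
      _ = ∑ a : V, (if G.Adj b a then (1:ℝ) else 0) :=
          Finset.sum_congr rfl fun a _ => if_congr (G.adj_comm a b) rfl rfl
      _ = (G.degree b : ℝ) := hdegsum b
  rw [div_le_one (by linarith)]
  linarith

/- ### Completeness of the eigenbasis and the Rayleigh bound -/

lemma dc_complete_rel (hdeg : ∀ v, 0 < G.degree v)
    (u : Fin (Fintype.card V) → V → ℝ)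
    (horth : ∀ i j, (∑ v, (G.degree v : ℝ) * u i v * u j v) = if i = j then 1 else 0)
    (v w : V) :
    Real.sqrt (G.degree v) * Real.sqrt (G.degree w) * (∑ i, u i v * u i w)
      = if v = w then 1 else 0 := by
  classical
  let e : Fin (Fintype.card V) ≃ V := (Fintype.equivFin V).symm
  let U : Matrix (Fin (Fintype.card V)) (Fin (Fintype.card V)) ℝ :=
    fun i j => Real.sqrt (G.degree (e j)) * u i (e j)
  have hUUt : U * U.transpose = 1 := by
    ext i k
    simp only [Matrix.mul_apply, Matrix.transpose_apply, Matrix.one_apply]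
    simp only [U]
    have hstep : ∀ j, (Real.sqrt (G.degree (e j)) * u i (e j))
        * (Real.sqrt (G.degree (e j)) * u k (e j))
        = (G.degree (e j) : ℝ) * u i (e j) * u k (e j) := by
      intro j
      have h := Real.mul_self_sqrt (by positivity : (0:ℝ) ≤ (G.degree (e j) : ℝ))
      linear_combination (u i (e j) * u k (e j)) * h
    rw [Finset.sum_congr rfl fun j _ => hstep j]
    rw [Equiv.sum_comp e (fun x => (G.degree x : ℝ) * u i x * u k x)]
    exact horth i k
  have hUtU : U.transpose * U = 1 := mul_eq_one_comm.mp hUUt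
  have key : ∀ j l : Fin (Fintype.card V), (∑ i, (Real.sqrt (G.degree (e j)) * u i (e j)) *
      (Real.sqrt (G.degree (e l)) * u i (e l))) = if j = l then 1 else 0 := by
    intro j l
    have h := congrFun (congrFun hUtU j) l
    simp only [Matrix.mul_apply, Matrix.transpose_apply, Matrix.one_apply] at h
    simp only [U] at h
    rw [← h]
  have hcond : (if e.symm v = e.symm w then (1:ℝ) else 0) = if v = w then 1 else 0 :=
    if_congr ⟨fun h => by simpa [e] using congrArg e h, fun h => by rw [h]⟩ rfl rfl
  rw [← hcond, ← key (e.symm v) (e.symm w)]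
  rw [e.apply_symm_apply v, e.apply_symm_apply w, Finset.mul_sum]
  exact Finset.sum_congr rfl fun i _ => by ring

lemma dc_expandG (hdeg : ∀ v, 0 < G.degree v)
    (u : Fin (Fintype.card V) → V → ℝ)
    (horth : ∀ i j, (∑ v, (G.degree v : ℝ) * u i v * u j v) = if i = j then 1 else 0)
    (g : V → ℝ) (w : V) :
    ∑ i, (∑ v, (G.degree v : ℝ) * g v * u i v) * u i w = g w := by
  classical
  have h1 : ∑ i, (∑ v, (G.degree v : ℝ) * g v * u i v) * u i w
      = ∑ v, (G.degree v : ℝ) * g v * (∑ i, u i v * u i w) := by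
    calc ∑ i, (∑ v, (G.degree v : ℝ) * g v * u i v) * u i w
        = ∑ i, ∑ v, ((G.degree v : ℝ) * g v * u i v) * u i w := by
          exact Finset.sum_congr rfl fun i _ => Finset.sum_mul _ _ _
      _ = ∑ v, ∑ i, ((G.degree v : ℝ) * g v * u i v) * u i w := Finset.sum_comm
      _ = ∑ v, (G.degree v : ℝ) * g v * (∑ i, u i v * u i w) := by
          refine Finset.sum_congr rfl fun v _ => ?_
          rw [Finset.mul_sum]
          exact Finset.sum_congr rfl fun i _ => by ring
  rw [h1]
  rw [Finset.sum_eq_single w]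
  · have h := dc_complete_rel G hdeg u horth w w
    norm_num at h
    have hdw : ((G.degree w : ℝ)) * (∑ i, u i w * u i w) = 1 := h
    calc (G.degree w : ℝ) * g w * (∑ i, u i w * u i w)
        = g w * ((G.degree w : ℝ) * (∑ i, u i w * u i w)) := by ring
      _ = g w := by rw [hdw]; ring
  · intro v _ hvw
    have h := dc_complete_rel G hdeg u horth v w
    rw [if_neg hvw] at h
    have hpos : (0:ℝ) < Real.sqrt (G.degree v) * Real.sqrt (G.degree w) := by
      have := hdeg v; have := hdeg w
      apply mul_pos <;> { apply Real.sqrt_pos.mpr; positivity }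
    have : (∑ i, u i v * u i w) = 0 := by
      rcases mul_eq_zero.mp h with h' | h'
      · exact absurd h' hpos.ne'
      · exact h'
    rw [this]; ring
  · intro h; exact absurd (Finset.mem_univ w) h

lemma dc_top_lt {V : Type*} [Fintype V] (hN : 2 ≤ Fintype.card V) :
    Fintype.card V - 1 < Fintype.card V := by omega

lemma dc_rayleigh (hdeg : ∀ v, 0 < G.degree v) (hN : 2 ≤ Fintype.card V)
    (lam : Fin (Fintype.card V) → ℝ) (hmono : Monotone lam)
    (u : Fin (Fintype.card V) → V → ℝ)
    (heig : ∀ i, nlapG G (u i) = lam i • u i)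
    (horth : ∀ i j, (∑ v, (G.degree v : ℝ) * u i v * u j v) = if i = j then 1 else 0)
    (g : V → ℝ) :
    ∑ v, (G.degree v : ℝ) * nlapG G g v * g v
      ≤ lam ⟨Fintype.card V - 1, dc_top_lt hN⟩ * ∑ v, (G.degree v : ℝ) * g v * g v := by
  classical
  set top : Fin (Fintype.card V) := ⟨Fintype.card V - 1, by omega⟩ with htop
  set c : Fin (Fintype.card V) → ℝ := fun i => ∑ v, (G.degree v : ℝ) * g v * u i v with hc
  have hnorm : ∑ i, c i * c i = ∑ v, (G.degree v : ℝ) * g v * g v := by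
    calc ∑ i, c i * c i = ∑ i, ∑ v, (G.degree v : ℝ) * g v * (c i * u i v) := by
          refine Finset.sum_congr rfl fun i _ => ?_
          rw [hc]; simp only []
          rw [Finset.mul_sum]
          refine Finset.sum_congr rfl fun v _ => by ring
      _ = ∑ v, (G.degree v : ℝ) * g v * (∑ i, c i * u i v) := by
          rw [Finset.sum_comm]
          exact Finset.sum_congr rfl fun v _ => (Finset.mul_sum _ _ _).symm
      _ = ∑ v, (G.degree v : ℝ) * g v * g v := by
          refine Finset.sum_congr rfl fun v _ => ?_
          rw [dc_expandG G hdeg u horth g v]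
  have hlamc : ∀ i, lam i * c i = c i - ∑ p ∈ dcPe G, u i p.1 * g p.2 := by
    intro i
    have h1 : ∑ v, (G.degree v : ℝ) * nlapG G (u i) v * g v
        = (∑ v, (G.degree v : ℝ) * u i v * g v) - ∑ p ∈ dcPe G, u i p.1 * g p.2 :=
      dc_Qform G hdeg (u i) g
    have h2 : ∑ v, (G.degree v : ℝ) * nlapG G (u i) v * g v = lam i * c i := by
      rw [heig i, hc]
      simp only [Pi.smul_apply, smul_eq_mul]
      rw [Finset.mul_sum]
      exact Finset.sum_congr rfl fun v _ => by ring
    have h3 : (∑ v, (G.degree v : ℝ) * u i v * g v) = c i := by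
      rw [hc]; exact Finset.sum_congr rfl fun v _ => by ring
    rw [← h2, h1, h3]
  have henergy : ∑ i, lam i * (c i * c i) = ∑ v, (G.degree v : ℝ) * nlapG G g v * g v := by
    have e1 : ∑ i, lam i * (c i * c i) = (∑ i, c i * c i) - ∑ p ∈ dcPe G, g p.1 * g p.2 := by
      calc ∑ i, lam i * (c i * c i)
          = ∑ i, (c i * c i - c i * ∑ p ∈ dcPe G, u i p.1 * g p.2) := by
            refine Finset.sum_congr rfl fun i _ => ?_
            linear_combination c i * hlamc i
        _ = (∑ i, c i * c i) - ∑ i, c i * ∑ p ∈ dcPe G, u i p.1 * g p.2 :=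
            Finset.sum_sub_distrib _ _
        _ = (∑ i, c i * c i) - ∑ p ∈ dcPe G, g p.1 * g p.2 := by
            congr 1
            calc ∑ i, c i * ∑ p ∈ dcPe G, u i p.1 * g p.2
                = ∑ i, ∑ p ∈ dcPe G, (c i * u i p.1) * g p.2 := by
                  refine Finset.sum_congr rfl fun i _ => ?_
                  rw [Finset.mul_sum]
                  exact Finset.sum_congr rfl fun p _ => by ring
              _ = ∑ p ∈ dcPe G, ∑ i, (c i * u i p.1) * g p.2 := Finset.sum_comm
              _ = ∑ p ∈ dcPe G, g p.1 * g p.2 := by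
                  refine Finset.sum_congr rfl fun p _ => ?_
                  rw [← Finset.sum_mul]
                  rw [dc_expandG G hdeg u horth g p.1]
    rw [e1, hnorm, dc_Qform G hdeg g g]
  rw [← henergy, ← hnorm, Finset.mul_sum]
  refine Finset.sum_le_sum fun i _ => ?_
  have hle : lam i ≤ lam top := by
    apply hmono
    rw [htop, Fin.le_def]
    simp only [Fin.val_mk]
    have := i.isLt
    omega
  nlinarith [mul_self_nonneg (c i), hle]

end Graph

theorem stmt7 {V : Type*} [Fintype V] [DecidableEq V]
    (G : SimpleGraph V) [DecidableRel G.Adj]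
    (hconn : G.Connected)
    (hN : 2 ≤ Fintype.card V)
    (lam : Fin (Fintype.card V) → ℝ) (hmono : Monotone lam)
    (u : Fin (Fintype.card V) → V → ℝ)
    (heig : ∀ i, nlapG G (u i) = lam i • u i)
    (horth : ∀ i j, (∑ v, (G.degree v : ℝ) * u i v * u j v) = if i = j then 1 else 0) :
    2 * dualCheeger G ≤ lam ⟨Fintype.card V - 1, by omega⟩ ∧
      lam ⟨Fintype.card V - 1, by omega⟩ ≤
        1 + Real.sqrt (1 - (1 - dualCheeger G) ^ 2) := by
  classical
  -- positive degrees
  have hdeg : ∀ v, 0 < G.degree v := by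
    intro v
    rw [G.degree_pos_iff_exists_adj]
    obtain ⟨w, hw⟩ := Fintype.exists_ne_of_one_lt_card (by omega) v
    obtain ⟨p⟩ := hconn.preconnected v w
    cases p with
    | nil => exact absurd rfl (Ne.symm hw)
    | cons h _ => exact ⟨_, h⟩
  set top : Fin (Fintype.card V) := ⟨Fintype.card V - 1, by omega⟩ with htop
  set L : ℝ := lam top with hL
  set f : V → ℝ := u top with hf
  -- the Rayleigh bound, restated
  have hray : ∀ g : V → ℝ, (1/2) * ∑ p ∈ dcPe G, (g p.1 - g p.2)^2
      ≤ L * ∑ v, (G.degree v : ℝ) * g v * g v := by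
    intro g
    rw [← dc_Qhalf G hdeg g]
    exact dc_rayleigh G hdeg hN lam hmono u heig horth g
  -- L ≥ 1
  have hL1 : 1 ≤ L := by
    obtain ⟨a⟩ : Nonempty V := Fintype.card_pos_iff.mp (by omega)
    set g : V → ℝ := fun v => if v = a then 1 else 0 with hg
    have hgg : ∑ v, (G.degree v : ℝ) * g v * g v = (G.degree a : ℝ) := by
      rw [Finset.sum_eq_single a]
      · simp [hg]
      · intro v _ hva
        simp [hg, hva]
      · intro h; exact absurd (Finset.mem_univ a) h
    have hQg : ∑ v, (G.degree v : ℝ) * nlapG G g v * g v = (G.degree a : ℝ) := by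
      rw [dc_Qform G hdeg g g, hgg]
      have : ∑ p ∈ dcPe G, g p.1 * g p.2 = 0 := by
        refine Finset.sum_eq_zero fun p hp => ?_
        have hadj := (dc_mem_Pe G).mp hp
        have hne := G.ne_of_adj hadj
        simp only [hg]
        by_cases h1 : p.1 = a
        · rw [if_pos h1, if_neg (by rw [← h1]; exact fun h => hne h.symm)]; ring
        · rw [if_neg h1]; ring
      rw [this]; ring
    have := dc_rayleigh G hdeg hN lam hmono u heig horth g
    rw [hQg, hgg, ← hL] at this
    have hda : (0:ℝ) < (G.degree a : ℝ) := by exact_mod_cast hdeg a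
    nlinarith
  -- Part 1
  have part1 : dualCheeger G ≤ L / 2 := by
    apply Real.sSup_le
    · rintro r ⟨V₁, V₂, h1, h2, hdisj, rfl⟩
      have hvol1 : (0:ℝ) < ∑ v ∈ V₁, (G.degree v : ℝ) :=
        Finset.sum_pos (fun v _ => by exact_mod_cast hdeg v) h1
      have hvol2 : (0:ℝ) < ∑ v ∈ V₂, (G.degree v : ℝ) :=
        Finset.sum_pos (fun v _ => by exact_mod_cast hdeg v) h2
      set E : ℝ := ∑ a ∈ V₁, ∑ b ∈ V₂, if G.Adj a b then (1 : ℝ) else 0 with hE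
      set g : V → ℝ := fun v => (if v ∈ V₁ then (1:ℝ) else 0) - (if v ∈ V₂ then 1 else 0) with hg
      have hgg : ∑ v, (G.degree v : ℝ) * g v * g v
          = (∑ v ∈ V₁, (G.degree v : ℝ)) + ∑ v ∈ V₂, (G.degree v : ℝ) := by
        have hpt : ∀ v : V, (G.degree v : ℝ) * g v * g v
            = (if v ∈ V₁ then (G.degree v:ℝ) else 0) + (if v ∈ V₂ then (G.degree v:ℝ) else 0) := by
          intro v
          by_cases hv1 : v ∈ V₁
          · have hv2 : v ∉ V₂ := Finset.disjoint_left.mp hdisj hv1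
            simp [hg, hv1, hv2]
          · by_cases hv2 : v ∈ V₂ <;> simp [hg, hv1, hv2]
        rw [Finset.sum_congr rfl fun v _ => hpt v, Finset.sum_add_distrib]
        congr 1 <;> rw [Finset.sum_ite_mem, Finset.univ_inter]
      -- lower bound for the quadratic form
      have hlow : 8 * E ≤ ∑ p ∈ dcPe G, (g p.1 - g p.2)^2 := by
        have hpt : ∀ p ∈ dcPe G,
            (if p.1 ∈ V₁ ∧ p.2 ∈ V₂ then (4:ℝ) else 0) + (if p.1 ∈ V₂ ∧ p.2 ∈ V₁ then (4:ℝ) else 0)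
              ≤ (g p.1 - g p.2)^2 := by
          intro p _
          by_cases hc1 : p.1 ∈ V₁ ∧ p.2 ∈ V₂
          · have hn1 : p.1 ∉ V₂ := Finset.disjoint_left.mp hdisj hc1.1
            have hn2 : p.2 ∉ V₁ := fun h => Finset.disjoint_left.mp hdisj h hc1.2
            have hc2 : ¬ (p.1 ∈ V₂ ∧ p.2 ∈ V₁) := fun h => hn1 h.1
            rw [if_pos hc1, if_neg hc2]
            simp [hg, hc1.1, hc1.2, hn1, hn2]
            norm_num
          · rw [if_neg hc1]
            by_cases hc2 : p.1 ∈ V₂ ∧ p.2 ∈ V₁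
            · have hn1 : p.1 ∉ V₁ := fun h => Finset.disjoint_left.mp hdisj h hc2.1
              have hn2 : p.2 ∉ V₂ := fun h => Finset.disjoint_left.mp hdisj hc2.2 h
              rw [if_pos hc2]
              simp [hg, hc2.1, hc2.2, hn1, hn2]
              norm_num
            · rw [if_neg hc2]
              simpa using sq_nonneg (g p.1 - g p.2)
        have hsum := Finset.sum_le_sum hpt
        rw [Finset.sum_add_distrib] at hsum
        have e1 : ∑ p ∈ dcPe G, (if p.1 ∈ V₁ ∧ p.2 ∈ V₂ then (4:ℝ) else 0) = 4 * E := by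
          have : ∀ p : V × V, (if p.1 ∈ V₁ ∧ p.2 ∈ V₂ then (4:ℝ) else 0)
              = 4 * (if p.1 ∈ V₁ ∧ p.2 ∈ V₂ then (1:ℝ) else 0) := by
            intro p; split_ifs <;> norm_num
          rw [Finset.sum_congr rfl fun p _ => this p, ← Finset.mul_sum,
            dc_helper_cross G V₁ V₂, hE]
        have e2 : ∑ p ∈ dcPe G, (if p.1 ∈ V₂ ∧ p.2 ∈ V₁ then (4:ℝ) else 0) = 4 * E := by
          have : ∀ p : V × V, (if p.1 ∈ V₂ ∧ p.2 ∈ V₁ then (4:ℝ) else 0)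
              = 4 * (if p.1 ∈ V₂ ∧ p.2 ∈ V₁ then (1:ℝ) else 0) := by
            intro p; split_ifs <;> norm_num
          rw [Finset.sum_congr rfl fun p _ => this p, ← Finset.mul_sum,
            dc_helper_cross G V₂ V₁, hE]
          congr 1
          rw [Finset.sum_comm]
          exact Finset.sum_congr rfl fun a _ => Finset.sum_congr rfl fun b _ =>
            if_congr (G.adj_comm b a) rfl rfl
        rw [e1, e2] at hsum
        linarith
      have := hray g
      rw [hgg] at this
      rw [div_le_div_iff₀ (by linarith) (by norm_num)]
      nlinarith
    · linarith
  refine ⟨by linarith, ?_⟩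

  -- ### Part 2
  -- basic eigenfunction identities
  have hD : ∑ v, (G.degree v : ℝ) * f v * f v = 1 := by
    have := horth top top
    simpa using this
  have hEdge : ∑ p ∈ dcPe G, f p.1 * f p.2 = 1 - L := by
    have hq := dc_Qform G hdeg f f
    have hlhs : ∑ v, (G.degree v : ℝ) * nlapG G f v * f v = L := by
      rw [hf, heig top]
      have : ∀ v, (G.degree v : ℝ) * (lam top • u top) v * u top v
          = lam top * ((G.degree v : ℝ) * u top v * u top v) := by
        intro v; simp only [Pi.smul_apply, smul_eq_mul]; ring
      rw [Finset.sum_congr rfl fun v _ => this v, ← Finset.mul_sum]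
      rw [hf] at hD
      rw [hD, hL]
      ring
    rw [hlhs, hD] at hq
    linarith
  have hsum2 : ∑ p ∈ dcPe G, ((f p.1)^2 + (f p.2)^2) = 2 := by
    rw [Finset.sum_add_distrib]
    have e1 : ∑ p ∈ dcPe G, (f p.1)^2 = 1 := by
      rw [dc_sumPe_fst G (fun v => (f v)^2)]
      rw [← hD]
      exact Finset.sum_congr rfl fun v _ => by ring
    have e2 : ∑ p ∈ dcPe G, (f p.2)^2 = 1 := by
      rw [dc_sumPe_snd G (fun v => (f v)^2)]
      rw [← hD]
      exact Finset.sum_congr rfl fun v _ => by ring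
    rw [e1, e2]; norm_num
  have hplus : ∑ p ∈ dcPe G, (f p.1 + f p.2)^2 = 2*(2 - L) := by
    calc ∑ p ∈ dcPe G, (f p.1 + f p.2)^2
        = ∑ p ∈ dcPe G, (((f p.1)^2 + (f p.2)^2) + 2*(f p.1 * f p.2)) :=
          Finset.sum_congr rfl fun p _ => by ring
      _ = (∑ p ∈ dcPe G, ((f p.1)^2 + (f p.2)^2)) + 2*∑ p ∈ dcPe G, f p.1 * f p.2 := by
          rw [Finset.sum_add_distrib, ← Finset.mul_sum]
      _ = 2 + 2*(1 - L) := by rw [hsum2, hEdge]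
      _ = 2*(2 - L) := by ring
  have hL2 : L ≤ 2 := by
    have h0 : 0 ≤ ∑ p ∈ dcPe G, (f p.1 + f p.2)^2 :=
      Finset.sum_nonneg fun p _ => sq_nonneg _
    linarith [hplus ▸ h0]
  rcases le_or_gt L 1 with hL1' | hL1'
  · linarith [Real.sqrt_nonneg (1 - (1 - dualCheeger G)^2)]
  -- main case 1 < L
  set c : ℝ := Real.sqrt (L * (2 - L)) with hc
  have hargnn : 0 ≤ L * (2 - L) := by nlinarith
  have hc0 : 0 ≤ c := Real.sqrt_nonneg _
  have hcsq : c^2 = L * (2 - L) := Real.sq_sqrt hargnn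
  have hc1 : c < 1 := by
    have harg : L * (2 - L) < 1 := by nlinarith
    calc c < Real.sqrt 1 := Real.sqrt_lt_sqrt hargnn harg
      _ = 1 := Real.sqrt_one
  set M : ℝ := ∑ p ∈ (dcPe G).filter (fun p => f p.1 * f p.2 < 0),
    min ((f p.1)^2) ((f p.2)^2) with hM
  have hkey : 1 - M ≤ c := by
    have h := dcaux_keyineq (dcPe G) (fun p => f p.1) (fun p => f p.2) (2 - L)
      (by simpa using hsum2) (by simpa using hplus) (by linarith)
    have heq : Real.sqrt ((2 - L) * (2 - (2 - L))) = c := by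
      rw [hc]; congr 1; ring
    rw [hM]
    rw [← heq]
    simpa using h
  -- thresholds
  set ts : Finset ℝ := (Finset.univ.filter (fun v => f v ≠ 0)).image (fun v => (f v)^2)
    with hts
  have hmemts : ∀ v : V, f v ≠ 0 → (f v)^2 ∈ ts := by
    intro v hv
    rw [hts]
    exact Finset.mem_image.mpr ⟨v, Finset.mem_filter.mpr ⟨Finset.mem_univ _, hv⟩, rfl⟩
  have htsne : ts.Nonempty := by
    obtain ⟨v0, hv0⟩ : ∃ v, f v ≠ 0 := by
      by_contra hall
      push_neg at hall
      have h0 : ∑ v, (G.degree v : ℝ) * f v * f v = 0 :=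
        Finset.sum_eq_zero fun v _ => by rw [hall v]; ring
      linarith [hD, h0]
    exact ⟨(f v0)^2, hmemts v0 hv0⟩
  have htspos : ∀ x ∈ ts, (0:ℝ) < x := by
    intro x hx
    rw [hts] at hx
    obtain ⟨v, hv, rfl⟩ := Finset.mem_image.mp hx
    have hv' := (Finset.mem_filter.mp hv).2
    exact lt_of_le_of_ne (sq_nonneg _) (Ne.symm (pow_ne_zero 2 hv'))
  set w : ℝ → ℝ := fun t => t - dcaux_predv ts t with hw
  have hwpos : ∀ t ∈ ts, 0 < w t := by
    intro t ht
    have := dcaux_predv_lt ts t (htspos t ht)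
    rw [hw]
    simp only []
    linarith
  set vol1 : ℝ → ℝ := fun t => ∑ v, if 0 < f v ∧ t ≤ (f v)^2 then (G.degree v : ℝ) else 0
    with hvol1
  set vol2 : ℝ → ℝ := fun t => ∑ v, if f v < 0 ∧ t ≤ (f v)^2 then (G.degree v : ℝ) else 0
    with hvol2
  set cross : ℝ → ℝ := fun t => ∑ p ∈ dcPe G,
    if (0 < f p.1 ∧ t ≤ (f p.1)^2) ∧ (f p.2 < 0 ∧ t ≤ (f p.2)^2) then (1:ℝ) else 0 with hcross
  -- layer cake identities
  have Hvol1 : ∑ t ∈ ts, w t * vol1 t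
      = ∑ v, (if 0 < f v then (G.degree v : ℝ) * (f v)^2 else 0) := by
    have h1 : ∀ t, w t * vol1 t
        = ∑ v, (if 0 < f v ∧ t ≤ (f v)^2 then w t * (G.degree v : ℝ) else 0) := by
      intro t
      rw [hvol1]
      simp only []
      rw [Finset.mul_sum]
      exact Finset.sum_congr rfl fun v _ => by split_ifs <;> ring
    rw [Finset.sum_congr rfl fun t _ => h1 t, Finset.sum_comm]
    refine Finset.sum_congr rfl fun v _ => ?_
    by_cases h0 : 0 < f v
    · simp only [h0, true_and, if_true]
      rw [← Finset.sum_filter]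
      simp only [hw]
      rw [← Finset.sum_mul, dcaux_tele ts htspos (hmemts v (ne_of_gt h0))]
      ring
    · simp [h0]
  have Hvol2 : ∑ t ∈ ts, w t * vol2 t
      = ∑ v, (if f v < 0 then (G.degree v : ℝ) * (f v)^2 else 0) := by
    have h1 : ∀ t, w t * vol2 t
        = ∑ v, (if f v < 0 ∧ t ≤ (f v)^2 then w t * (G.degree v : ℝ) else 0) := by
      intro t
      rw [hvol2]
      simp only []
      rw [Finset.mul_sum]
      exact Finset.sum_congr rfl fun v _ => by split_ifs <;> ring
    rw [Finset.sum_congr rfl fun t _ => h1 t, Finset.sum_comm]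
    refine Finset.sum_congr rfl fun v _ => ?_
    by_cases h0 : f v < 0
    · simp only [h0, true_and, if_true]
      rw [← Finset.sum_filter]
      simp only [hw]
      rw [← Finset.sum_mul, dcaux_tele ts htspos (hmemts v (ne_of_lt h0))]
      ring
    · simp [h0]
  have Hvol : ∑ t ∈ ts, w t * (vol1 t + vol2 t) = 1 := by
    have e : ∑ t ∈ ts, w t * (vol1 t + vol2 t)
        = (∑ t ∈ ts, w t * vol1 t) + ∑ t ∈ ts, w t * vol2 t := by
      rw [← Finset.sum_add_distrib]
      exact Finset.sum_congr rfl fun t _ => by ring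
    rw [e, Hvol1, Hvol2, ← Finset.sum_add_distrib, ← hD]
    refine Finset.sum_congr rfl fun v _ => ?_
    rcases lt_trichotomy (f v) 0 with h | h | h
    · rw [if_neg (by linarith), if_pos h]
      ring
    · rw [if_neg (by linarith), if_neg (by linarith), h]
      ring
    · rw [if_pos h, if_neg (by linarith)]
      ring
  set m1 : ℝ := ∑ p ∈ dcPe G,
    (if 0 < f p.1 ∧ f p.2 < 0 then min ((f p.1)^2) ((f p.2)^2) else 0) with hm1
  have Hcross : ∑ t ∈ ts, w t * cross t = m1 := by
    have h1 : ∀ t, w t * cross t = ∑ p ∈ dcPe G,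
        (if (0 < f p.1 ∧ t ≤ (f p.1)^2) ∧ (f p.2 < 0 ∧ t ≤ (f p.2)^2) then w t else 0) := by
      intro t
      rw [hcross]
      simp only []
      rw [Finset.mul_sum]
      exact Finset.sum_congr rfl fun p _ => by split_ifs <;> ring
    rw [Finset.sum_congr rfl fun t _ => h1 t, Finset.sum_comm, hm1]
    refine Finset.sum_congr rfl fun p _ => ?_
    by_cases hsg : 0 < f p.1 ∧ f p.2 < 0
    · rw [if_pos hsg]
      have hiff : ∀ t : ℝ, ((0 < f p.1 ∧ t ≤ (f p.1)^2) ∧ (f p.2 < 0 ∧ t ≤ (f p.2)^2))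
          ↔ (t ≤ min ((f p.1)^2) ((f p.2)^2)) := by
        intro t
        rw [le_min_iff]
        constructor
        · rintro ⟨⟨_, ha⟩, ⟨_, hb⟩⟩; exact ⟨ha, hb⟩
        · rintro ⟨ha, hb⟩; exact ⟨⟨hsg.1, ha⟩, ⟨hsg.2, hb⟩⟩
      rw [Finset.sum_congr rfl fun t _ => if_congr (hiff t) rfl rfl]
      have hmem : min ((f p.1)^2) ((f p.2)^2) ∈ ts := by
        rcases le_total ((f p.1)^2) ((f p.2)^2) with h | h
        · rw [min_eq_left h]; exact hmemts _ (ne_of_gt hsg.1)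
        · rw [min_eq_right h]; exact hmemts _ (ne_of_lt hsg.2)
      rw [← Finset.sum_filter]
      simp only [hw]
      exact dcaux_tele ts htspos hmem
    · rw [if_neg hsg]
      refine Finset.sum_eq_zero fun t _ => ?_
      rw [if_neg]
      rintro ⟨⟨ha, _⟩, ⟨hb, _⟩⟩
      exact hsg ⟨ha, hb⟩
  have HM : M = 2 * m1 := by
    have hsplit : M = (∑ p ∈ dcPe G,
        (if 0 < f p.1 ∧ f p.2 < 0 then min ((f p.1)^2) ((f p.2)^2) else 0))
        + ∑ p ∈ dcPe G, (if f p.1 < 0 ∧ 0 < f p.2 then min ((f p.1)^2) ((f p.2)^2) else 0) := by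
      rw [hM, Finset.sum_filter, ← Finset.sum_add_distrib]
      refine Finset.sum_congr rfl fun p _ => ?_
      by_cases ha : 0 < f p.1 ∧ f p.2 < 0
      · have hb : ¬ (f p.1 < 0 ∧ 0 < f p.2) := fun hb => by linarith [ha.1, hb.1]
        rw [if_pos ha, if_neg hb, if_pos (mul_neg_of_pos_of_neg ha.1 ha.2)]
        ring
      · by_cases hb : f p.1 < 0 ∧ 0 < f p.2
        · rw [if_neg ha, if_pos hb, if_pos (mul_neg_of_neg_of_pos hb.1 hb.2)]
          ring
        · rw [if_neg ha, if_neg hb, if_neg]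
          · ring
          · intro hlt
            rcases mul_neg_iff.mp hlt with ⟨h1', h2'⟩ | ⟨h1', h2'⟩
            · exact ha ⟨h1', h2'⟩
            · exact hb ⟨h1', h2'⟩
    have hswap : ∑ p ∈ dcPe G, (if f p.1 < 0 ∧ 0 < f p.2 then min ((f p.1)^2) ((f p.2)^2) else 0)
        = m1 := by
      rw [hm1]
      refine Finset.sum_nbij' (fun p => Prod.swap p) (fun p => Prod.swap p) ?_ ?_ ?_ ?_ ?_
      · intro p hp
        rw [dc_mem_Pe] at hp ⊢
        exact hp.symm
      · intro p hp
        rw [dc_mem_Pe] at hp ⊢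
        exact hp.symm
      · intro p _; rfl
      · intro p _; rfl
      · intro p _
        simp only [Prod.fst_swap, Prod.snd_swap]
        rw [min_comm]
        exact if_congr ⟨fun ⟨a, b⟩ => ⟨b, a⟩, fun ⟨a, b⟩ => ⟨b, a⟩⟩ rfl rfl
    rw [hsplit, hswap, hm1]
    ring
  -- the averaging argument
  have hIbad : ∑ t ∈ ts, w t * ((vol1 t + vol2 t) - 2 * cross t) = 1 - M := by
    calc ∑ t ∈ ts, w t * ((vol1 t + vol2 t) - 2 * cross t)
        = ∑ t ∈ ts, (w t * (vol1 t + vol2 t) - 2 * (w t * cross t)) :=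
          Finset.sum_congr rfl fun t _ => by ring
      _ = (∑ t ∈ ts, w t * (vol1 t + vol2 t)) - 2 * ∑ t ∈ ts, w t * cross t := by
          rw [Finset.sum_sub_distrib, ← Finset.mul_sum]
      _ = 1 - 2 * m1 := by rw [Hvol, Hcross]
      _ = 1 - M := by rw [HM]
  have hex : ∃ t ∈ ts, (vol1 t + vol2 t) - 2 * cross t ≤ c * (vol1 t + vol2 t) := by
    by_contra hcon
    push_neg at hcon
    have hstrict : ∑ t ∈ ts, w t * (c * (vol1 t + vol2 t))
        < ∑ t ∈ ts, w t * ((vol1 t + vol2 t) - 2 * cross t) :=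
      Finset.sum_lt_sum_of_nonempty htsne fun t ht =>
        mul_lt_mul_of_pos_left (hcon t ht) (hwpos t ht)
    have hlhs : ∑ t ∈ ts, w t * (c * (vol1 t + vol2 t))
        = c * ∑ t ∈ ts, w t * (vol1 t + vol2 t) := by
      rw [Finset.mul_sum]
      exact Finset.sum_congr rfl fun t _ => by ring
    rw [hlhs, Hvol, hIbad] at hstrict
    linarith
  obtain ⟨t, htmem, hbad⟩ := hex
  -- the two vertex sets
  set W1 : Finset V := Finset.univ.filter (fun v => 0 < f v ∧ t ≤ (f v)^2) with hW1
  set W2 : Finset V := Finset.univ.filter (fun v => f v < 0 ∧ t ≤ (f v)^2) with hW2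
  have hvol1W : vol1 t = ∑ v ∈ W1, (G.degree v : ℝ) := by
    rw [hvol1, hW1, Finset.sum_filter]
  have hvol2W : vol2 t = ∑ v ∈ W2, (G.degree v : ℝ) := by
    rw [hvol2, hW2, Finset.sum_filter]
  have hcrossW : cross t = ∑ a ∈ W1, ∑ b ∈ W2, (if G.Adj a b then (1:ℝ) else 0) := by
    rw [← dc_helper_cross G W1 W2, hcross]
    refine Finset.sum_congr rfl fun p _ => if_congr ?_ rfl rfl
    rw [hW1, hW2]
    simp only [Finset.mem_filter, Finset.mem_univ, true_and]
  have hvolpos : 0 < vol1 t + vol2 t := by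
    have ht' := htmem
    rw [hts] at ht'
    obtain ⟨v, hvmem, hveq⟩ := Finset.mem_image.mp ht'
    have hv : f v ≠ 0 := (Finset.mem_filter.mp hvmem).2
    have hvt : t ≤ (f v)^2 := le_of_eq hveq.symm
    have hvol1nn : 0 ≤ vol1 t := by
      rw [hvol1]
      exact Finset.sum_nonneg fun v' _ => by split_ifs <;> positivity
    have hvol2nn : 0 ≤ vol2 t := by
      rw [hvol2]
      exact Finset.sum_nonneg fun v' _ => by split_ifs <;> positivity
    rcases hv.lt_or_gt with hneg | hpos
    · have : (G.degree v : ℝ) ≤ vol2 t := by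
        rw [hvol2]
        have := Finset.single_le_sum
          (f := fun v' => if f v' < 0 ∧ t ≤ (f v')^2 then (G.degree v' : ℝ) else 0)
          (fun v' _ => by split_ifs <;> positivity) (Finset.mem_univ v)
        rwa [if_pos ⟨hneg, hvt⟩] at this
      have hd : (0:ℝ) < (G.degree v : ℝ) := by exact_mod_cast hdeg v
      linarith
    · have : (G.degree v : ℝ) ≤ vol1 t := by
        rw [hvol1]
        have := Finset.single_le_sum
          (f := fun v' => if 0 < f v' ∧ t ≤ (f v')^2 then (G.degree v' : ℝ) else 0)
          (fun v' _ => by split_ifs <;> positivity) (Finset.mem_univ v)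
        rwa [if_pos ⟨hpos, hvt⟩] at this
      have hd : (0:ℝ) < (G.degree v : ℝ) := by exact_mod_cast hdeg v
      linarith
  have hW1ne : W1.Nonempty := by
    by_contra h
    rw [Finset.not_nonempty_iff_eq_empty] at h
    have h1 : vol1 t = 0 := by rw [hvol1W, h, Finset.sum_empty]
    have h2 : cross t = 0 := by rw [hcrossW, h, Finset.sum_empty]
    rw [h1, h2] at hbad
    rw [h1] at hvolpos
    nlinarith
  have hW2ne : W2.Nonempty := by
    by_contra h
    rw [Finset.not_nonempty_iff_eq_empty] at h
    have h1 : vol2 t = 0 := by rw [hvol2W, h, Finset.sum_empty]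
    have h2 : cross t = 0 := by
      rw [hcrossW, h]
      simp
    rw [h1, h2] at hbad
    rw [h1] at hvolpos
    nlinarith
  have hdisjW : Disjoint W1 W2 := by
    rw [Finset.disjoint_left]
    intro v h1 h2
    rw [hW1, Finset.mem_filter] at h1
    rw [hW2, Finset.mem_filter] at h2
    linarith [h1.2.1, h2.2.1]
  -- membership in the dual Cheeger set
  have hbdd : BddAbove { r : ℝ | ∃ V₁ V₂ : Finset V, V₁.Nonempty ∧ V₂.Nonempty ∧ Disjoint V₁ V₂ ∧
      r = 2 * (∑ a ∈ V₁, ∑ b ∈ V₂, if G.Adj a b then (1 : ℝ) else 0) /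
        ((∑ v ∈ V₁, (G.degree v : ℝ)) + ∑ v ∈ V₂, (G.degree v : ℝ)) } := by
    refine ⟨1, ?_⟩
    rintro x ⟨V₁, V₂, h1, h2, hd, rfl⟩
    exact dc_element_le_one G hdeg V₁ V₂ h1 h2
  have hrmem : 2 * (∑ a ∈ W1, ∑ b ∈ W2, if G.Adj a b then (1 : ℝ) else 0) /
      ((∑ v ∈ W1, (G.degree v : ℝ)) + ∑ v ∈ W2, (G.degree v : ℝ))
      ∈ { r : ℝ | ∃ V₁ V₂ : Finset V, V₁.Nonempty ∧ V₂.Nonempty ∧ Disjoint V₁ V₂ ∧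
      r = 2 * (∑ a ∈ V₁, ∑ b ∈ V₂, if G.Adj a b then (1 : ℝ) else 0) /
        ((∑ v ∈ V₁, (G.degree v : ℝ)) + ∑ v ∈ V₂, (G.degree v : ℝ)) } :=
    ⟨W1, W2, hW1ne, hW2ne, hdisjW, rfl⟩
  have hr_le : 2 * (∑ a ∈ W1, ∑ b ∈ W2, if G.Adj a b then (1 : ℝ) else 0) /
      ((∑ v ∈ W1, (G.degree v : ℝ)) + ∑ v ∈ W2, (G.degree v : ℝ)) ≤ dualCheeger G :=
    le_csSup hbdd hrmem
  have hDCle1 : dualCheeger G ≤ 1 := by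
    apply Real.sSup_le
    · rintro x ⟨V₁, V₂, h1, h2, hd, rfl⟩
      exact dc_element_le_one G hdeg V₁ V₂ h1 h2
    · norm_num
  have h1cr : 1 - c ≤ 2 * (∑ a ∈ W1, ∑ b ∈ W2, if G.Adj a b then (1 : ℝ) else 0) /
      ((∑ v ∈ W1, (G.degree v : ℝ)) + ∑ v ∈ W2, (G.degree v : ℝ)) := by
    rw [← hcrossW, ← hvol1W, ← hvol2W, le_div_iff₀ hvolpos]
    linarith
  have hcle : 1 - dualCheeger G ≤ c := by linarith
  have hge : -c ≤ 1 - dualCheeger G := by linarith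
  have hsq : (1 - dualCheeger G)^2 ≤ c^2 := sq_le_sq' hge hcle
  have harg2 : (L - 1)^2 ≤ 1 - (1 - dualCheeger G)^2 := by
    have e : (L - 1)^2 = 1 - c^2 := by linear_combination hcsq
    linarith
  have hfin : L - 1 ≤ Real.sqrt (1 - (1 - dualCheeger G)^2) := by
    calc L - 1 = Real.sqrt ((L - 1)^2) := (Real.sqrt_sq (by linarith)).symm
      _ ≤ _ := Real.sqrt_le_sqrt harg2
  linarith
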